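/- The derivative of I(ξ) = ξφ ln φ − ξ(1−φ) ln ξ − (1−ξ+ξφ) ln(1−ξ+ξφ) with respect to ξ vanishes at ξ* = 1/(φ^{φ/(φ−1)} − φ + 1), for any φ ∈ (0,1). -/

import Mathlib

open Real

/-- The derivative of
`I(ξ) = ξφ ln φ − ξ(1−φ) ln ξ − (1−ξ+ξφ) ln(1−ξ+ξφ)` with respect to `ξ`
vanishes at `ξ* = 1/(φ^{φ/(φ−1)} − φ + 1)`, for any `φ ∈ (0,1)`. -/
theorem zChannel_deriv_zero_at_optimum
    (φ : ℝ) (hφ : φ ∈ Set.Ioo (0 : ℝ) 1) :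
    HasDerivAt
      (fun ξ : ℝ => ξ * φ * Real.log φ - ξ * (1 - φ) * Real.log ξ
        - (1 - ξ + ξ * φ) * Real.log (1 - ξ + ξ * φ))
      0 (1 / (φ ^ (φ / (φ - 1)) - φ + 1)) := by
  obtain ⟨hφ0, hφ1⟩ := hφ
  set c := φ ^ (φ / (φ - 1)) with hc
  have hc0 : 0 < c := Real.rpow_pos_of_pos hφ0 _
  have hd0 : 0 < c - φ + 1 := by linarith
  set x := 1 / (c - φ + 1) with hx
  have hx0 : 0 < x := by positivity
  have hxc : x * (c - φ + 1) = 1 := by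
    rw [hx]; field_simp
  have hu : 1 - x + x * φ = x * c := by linear_combination -hxc
  have hu0 : 0 < 1 - x + x * φ := by rw [hu]; positivity
  have hlog : Real.log (1 - x + x * φ) = Real.log x + (φ / (φ - 1)) * Real.log φ := by
    rw [hu, Real.log_mul hx0.ne' hc0.ne', hc, Real.log_rpow hφ0]
  have h1 : HasDerivAt (fun ξ : ℝ => ξ * φ * Real.log φ) (φ * Real.log φ) x := by
    simpa [mul_assoc] using (hasDerivAt_id x).mul_const (φ * Real.log φ)
  have h2 : HasDerivAt (fun ξ : ℝ => ξ * (1 - φ) * Real.log ξ)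
      (1 * (1 - φ) * Real.log x + x * (1 - φ) * x⁻¹) x :=
    ((hasDerivAt_id x).mul_const (1 - φ)).mul (Real.hasDerivAt_log hx0.ne')
  have hu' : HasDerivAt (fun ξ : ℝ => 1 - ξ + ξ * φ) (-1 + φ) x := by
    have := (((hasDerivAt_id' x).const_sub (1:ℝ)).add
      ((hasDerivAt_id' x).mul_const φ)); rw [one_mul] at this; exact this
  have h3 : HasDerivAt (fun ξ : ℝ => (1 - ξ + ξ * φ) * Real.log (1 - ξ + ξ * φ))
      ((-1 + φ) * Real.log (1 - x + x * φ) + (1 - x + x * φ) * ((-1 + φ) / (1 - x + x * φ))) x :=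
    hu'.mul (hu'.log hu0.ne')
  have H := (h1.sub h2).sub h3
  have hφ1' : φ - 1 ≠ 0 := by linarith
  have hD : φ * Real.log φ - (1 * (1 - φ) * Real.log x + x * (1 - φ) * x⁻¹)
      - ((-1 + φ) * Real.log (1 - x + x * φ)
        + (1 - x + x * φ) * ((-1 + φ) / (1 - x + x * φ))) = 0 := by
    rw [hlog, mul_div_assoc', mul_div_cancel_left₀ _ hu0.ne']
    field_simp
    ring
  rw [hD] at H
  exact H
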